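/- Let $d_1 \le d_2 \le \dots \le d_N$ be nonnegative reals, $\epsilon \in (0,1)$, $\theta \ge 0$, $k := \lfloor \epsilon N \rfloor$ with $k+1 \le N$. Suppose $\frac{\theta}{\epsilon} + \mathrm{CVaR}_{1-\epsilon}(-d) \le 0$, where $\mathrm{CVaR}_{1-\epsilon}(-d) = \min_{t'} \{ t' + \frac{1}{\epsilon N}\sum_i \max\{0, -d_i - t'\}\}$. Then setting $t := d_{k+1}$ and $r_i := \max\{0, t - d_i\}$ for each $i$, we have $t \ge 0$, $r \ge 0$, $d_i \ge t - r_i$ for all $i$, and $\epsilon t \ge \theta + \frac{1}{N}\sum_{i=1}^N r_i$. -/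

import Mathlib

/-- t-bound lemma: if `θ/ε + CVaR_{1-ε}(-d) ≤ 0` for sorted nonnegative distances `d`,
then `t := d_{k+1}`, `r_i := max 0 (t - d_i)` give a feasible point of the
extended formulation: `t ≥ 0`, `r ≥ 0`, `d_i ≥ t - r_i`, and `ε t ≥ θ + (1/N) ∑ r_i`. -/
theorem stmt6 (N : ℕ) (d : Fin N → ℝ) (hd : ∀ i, 0 ≤ d i) (hmono : Monotone d)
    (ε θ : ℝ) (hε : ε ∈ Set.Ioo (0:ℝ) 1) (hθ : 0 ≤ θ)
    (k : ℕ) (hkdef : k = ⌊ε * N⌋₊) (hk : k + 1 ≤ N)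
    (hcvar : θ / ε + ⨅ t' : ℝ, (t' + (1 / (ε * N)) * ∑ i, max 0 (-d i - t')) ≤ 0) :
    0 ≤ d ⟨k, by omega⟩ ∧
    (∀ i, 0 ≤ max 0 (d ⟨k, by omega⟩ - d i)) ∧
    (∀ i, d ⟨k, by omega⟩ - max 0 (d ⟨k, by omega⟩ - d i) ≤ d i) ∧
    θ + (1 / N) * ∑ i, max 0 (d ⟨k, by omega⟩ - d i) ≤ ε * d ⟨k, by omega⟩ := by
  obtain ⟨hε0, hε1⟩ := hε
  have hkN : k < N := by omega
  set κ : Fin N := ⟨k, hkN⟩ with hκ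
  set t : ℝ := d κ with ht
  have hN0 : 0 < (N : ℝ) := by exact_mod_cast (by omega : 0 < N)
  have hεN : 0 < ε * N := by positivity
  have hkle : (k : ℝ) ≤ ε * N := by rw [hkdef]; exact Nat.floor_le hεN.le
  have hklt : ε * N < (k : ℝ) + 1 := by
    rw [hkdef]; exact_mod_cast Nat.lt_floor_add_one (ε * N)
  have ht0 : 0 ≤ t := hd κ
  set S : ℝ := ∑ i, max 0 (t - d i) with hS
  -- the candidate value of the inner minimization at t' = -t
  have key : ∀ s : ℝ, -t + (1 / (ε * N)) * S ≤ s + (1 / (ε * N)) * ∑ i, max 0 (-d i - s) := by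
    intro s
    rcases le_total (-t) s with hs | hs
    · -- s ≥ -t
      have hsum : S - (s + t) * k ≤ ∑ i, max 0 (-d i - s) := by
        have hcard : (Finset.univ.filter (fun i : Fin N => (i : ℕ) < k)) = Finset.Iio κ := by
          ext i; simp only [Finset.mem_filter, Finset.mem_univ, true_and, Finset.mem_Iio, Fin.lt_def]; exact Iff.rfl
        have hterm : ∀ i : Fin N,
            max 0 (t - d i) - (if (i : ℕ) < k then (s + t) else 0) ≤ max 0 (-d i - s) := by
          intro i
          by_cases hik : (i : ℕ) < k
          · simp only [hik, if_true]
            rcases le_total (t - d i) 0 with h | h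
            · have : (0:ℝ) ≤ max 0 (-d i - s) := le_max_left _ _
              rw [max_eq_left h]; linarith
            · have : -d i - s ≤ max 0 (-d i - s) := le_max_right _ _
              rw [max_eq_right h]; linarith
          · have hdi : t ≤ d i := hmono (by simp [hκ, Fin.le_def]; omega)
            simp only [hik, if_false, sub_zero]
            rw [max_eq_left (by linarith)]
            exact le_max_left _ _
        calc S - (s + t) * k
            = ∑ i, (max 0 (t - d i) - (if (i : ℕ) < k then (s + t) else 0)) := by
              rw [Finset.sum_sub_distrib, Finset.sum_ite, Finset.sum_const_zero,
                Finset.sum_const, hcard, Fin.card_Iio]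
              simp only [hS, smul_eq_mul]
              ring
          _ ≤ ∑ i, max 0 (-d i - s) := Finset.sum_le_sum fun i _ => hterm i
        -- done
      have hc : (1 / (ε * N)) * (S - (s + t) * k) ≤ (1 / (ε * N)) * ∑ i, max 0 (-d i - s) :=
        mul_le_mul_of_nonneg_left hsum (by positivity)
      have hck : (1 / (ε * N)) * ((s + t) * k) ≤ s + t := by
        rw [div_mul_eq_mul_div, one_mul, div_le_iff₀ hεN]
        have h1 : 0 ≤ s + t := by linarith
        nlinarith
      nlinarith [hc]
    · -- s ≤ -t
      set u : ℝ := -t - s with hu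
      have hu0 : 0 ≤ u := by simp [hu]; linarith
      have hsum : S + u * (k + 1) ≤ ∑ i, max 0 (-d i - s) := by
        have hcard : (Finset.univ.filter (fun i : Fin N => (i : ℕ) ≤ k)) = Finset.Iic κ := by
          ext i; simp only [Finset.mem_filter, Finset.mem_univ, true_and, Finset.mem_Iic, Fin.le_def]; exact Iff.rfl
        have hterm : ∀ i : Fin N,
            max 0 (t - d i) + (if (i : ℕ) ≤ k then u else 0) ≤ max 0 (-d i - s) := by
          intro i
          by_cases hik : (i : ℕ) ≤ k
          · have hdi : d i ≤ t := hmono (by simp [hκ, Fin.le_def]; omega)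
            simp only [hik, if_true]
            rw [max_eq_right (by linarith)]
            have : -d i - s = (t - d i) + u := by simp [hu]; ring
            rw [this, max_eq_right (by linarith)]
          · simp only [hik, if_false, add_zero]
            have hdi : t ≤ d i := hmono (by simp [hκ, Fin.le_def]; omega)
            rw [max_eq_left (by linarith)]
            exact le_max_left _ _
        calc S + u * (k + 1)
            = ∑ i, (max 0 (t - d i) + (if (i : ℕ) ≤ k then u else 0)) := by
              rw [Finset.sum_add_distrib, Finset.sum_ite, Finset.sum_const_zero,
                Finset.sum_const, hcard, Fin.card_Iic]
              simp only [hS, smul_eq_mul]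
              push_cast
              ring
          _ ≤ ∑ i, max 0 (-d i - s) := Finset.sum_le_sum fun i _ => hterm i
      have hc : (1 / (ε * N)) * (S + u * (k + 1)) ≤ (1 / (ε * N)) * ∑ i, max 0 (-d i - s) :=
        mul_le_mul_of_nonneg_left hsum (by positivity)
      have hck : u ≤ (1 / (ε * N)) * (u * (k + 1)) := by
        rw [div_mul_eq_mul_div, one_mul, le_div_iff₀ hεN]
        nlinarith
      nlinarith [hc]
  have hle : -t + (1 / (ε * N)) * S ≤ ⨅ t' : ℝ, (t' + (1 / (ε * N)) * ∑ i, max 0 (-d i - t')) :=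
    le_ciInf key
  have hmain : θ / ε + (-t + (1 / (ε * N)) * S) ≤ 0 := le_trans (by linarith) hcvar
  refine ⟨ht0, fun i => le_max_left _ _, fun i => by
    have := le_max_right 0 (t - d i); linarith, ?_⟩
  have h1 : θ / ε * ε = θ := div_mul_cancel₀ θ hε0.ne'
  
  have hmul := mul_le_mul_of_nonneg_right hmain hε0.le
  have e : (θ / ε + (-t + 1 / (ε * ↑N) * S)) * ε = θ - ε * t + (1 / ↑N) * S := by
    field_simp
    ring
  rw [e, zero_mul] at hmul
  linarith
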